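/- arXiv:0904.2863 — 6 statements merged into one kernel-verified Lean document; each statement's English description precedes it below -/
import Mathlib

section
/- A graph G that is sparse in ℝ^d (i.e., admits a drawing in ℝ^d with positive minimum node distance s > 0 and finite maximum connected range r < ∞) can be embedded in the h-fuzz Z_d^{(h)} of the d-dimensional integer lattice for some positive integer h; i.e., there is an injective map η: V → Z^d such that every edge (u,v) of G satisfies d_{Z_d}(η(u), η(v)) ≤ h. -/
/-- The d-dimensional square lattice: vertices are ℤ^d, with an edge between points
at (Euclidean, equivalently ℓ¹) distance 1. -/
def Zlat (d : ℕ) : SimpleGraph (Fin d → ℤ) where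
  Adj u v := ∑ i, |u i - v i| = 1
  symm := by
    constructor
    intro u v h
    simpa only [abs_sub_comm] using h
  loopless := by constructor; intro u; simp

lemma zlat_exists_walk (d : ℕ) : ∀ n : ℕ, ∀ u v : Fin d → ℤ,
    ∑ i, |u i - v i| = n → ∃ p : (Zlat d).Walk u v, p.length = n := by
  intro n
  induction n with
  | zero =>
    intro u v h
    have huv : u = v := by
      funext i
      have h1 : |u i - v i| ≤ 0 := by
        have := Finset.single_le_sum (f := fun j => |u j - v j|)
          (fun j _ => abs_nonneg _) (Finset.mem_univ i)
        simpa [h] using this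
      have h2 : |u i - v i| = 0 := le_antisymm h1 (abs_nonneg _)
      have := abs_eq_zero.mp h2
      omega
    subst huv
    exact ⟨SimpleGraph.Walk.nil, rfl⟩
  | succ n ih =>
    intro u v h
    have hne : ∃ i, u i ≠ v i := by
      by_contra h'
      push_neg at h'
      simp [h'] at h
      omega
    obtain ⟨i, hi⟩ := hne
    set e : ℤ := if u i < v i then 1 else -1 with he
    set u' : Fin d → ℤ := Function.update u i (u i + e) with hu'
    have key : |u i + e - v i| = |u i - v i| - 1 := by
      rcases lt_or_gt_of_ne hi with hlt | hgt
      · rw [if_pos hlt] at he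
        rw [he, abs_of_nonpos (by omega), abs_of_nonpos (by omega)]
        ring
      · rw [if_neg (not_lt.mpr hgt.le)] at he
        rw [he, abs_of_nonneg (by omega), abs_of_nonneg (by omega)]
        ring
    have hadj : (Zlat d).Adj u u' := by
      show ∑ j, |u j - u' j| = 1
      rw [Fintype.sum_eq_single i]
      · rw [hu', Function.update_self]
        rcases lt_or_gt_of_ne hi with hlt | hgt
        · rw [if_pos hlt] at he; rw [he]; norm_num
        · rw [if_neg (not_lt.mpr hgt.le)] at he; rw [he]; norm_num
      · intro j hj
        rw [hu', Function.update_of_ne hj]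
        simp
    have hui' : u' i = u i + e := by rw [hu', Function.update_self]
    have hsum : ∑ j, |u' j - v j| = n := by
      have h1 := Fintype.sum_eq_add_sum_compl i (fun j => |u j - v j|)
      have h2 := Fintype.sum_eq_add_sum_compl i (fun j => |u' j - v j|)
      have h3 : ∑ j ∈ ({i}ᶜ : Finset (Fin d)), |u' j - v j|
          = ∑ j ∈ ({i}ᶜ : Finset (Fin d)), |u j - v j| := by
        refine Finset.sum_congr rfl fun j hj => ?_
        have : j ≠ i := by simpa using hj
        rw [hu', Function.update_of_ne this]
      rw [h1] at h
      rw [h2, h3, hui', key]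
      omega
    obtain ⟨p, hp⟩ := ih u' v hsum
    exact ⟨SimpleGraph.Walk.cons hadj p, by simp [hp]⟩

lemma zlat_dist_le (d : ℕ) (u v : Fin d → ℤ) :
    (Zlat d).dist u v ≤ (∑ i, |u i - v i|).toNat := by
  obtain ⟨p, hp⟩ := zlat_exists_walk d (∑ i, |u i - v i|).toNat u v
    (by rw [Int.toNat_of_nonneg (Finset.sum_nonneg fun i _ => abs_nonneg _)])
  exact hp ▸ SimpleGraph.dist_le p

lemma euclidean_coord_le {d : ℕ} (x y : EuclideanSpace ℝ (Fin d)) (i : Fin d) :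
    |x i - y i| ≤ dist x y := by
  rw [EuclideanSpace.dist_eq]
  have h1 : |x i - y i| = Real.sqrt (dist (x i) (y i) ^ 2) := by
    rw [Real.dist_eq, Real.sqrt_sq_eq_abs, abs_abs]
  rw [h1]
  apply Real.sqrt_le_sqrt
  exact Finset.single_le_sum (f := fun j => dist (x j) (y j) ^ 2)
    (fun j _ => sq_nonneg _) (Finset.mem_univ i)

/-- If G is sparse in ℝ^d, i.e. has a civilized drawing f (minimum node
distance s > 0 and maximum connected range at most r < ∞), then G embeds in the
h-fuzz of the lattice Z_d for some positive integer h: there is an injection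
η : V → ℤ^d with d_{Z_d}(η u, η v) ≤ h for every edge (u,v) of G. -/
theorem sparse_embeds_in_lattice_fuzz {V : Type*} {d : ℕ}
    (G : SimpleGraph V) (f : V → EuclideanSpace ℝ (Fin d))
    (s r : ℝ) (hs : 0 < s)
    (hmin : ∀ u v : V, u ≠ v → s ≤ dist (f u) (f v))
    (hr : ∀ u v : V, G.Adj u v → dist (f u) (f v) ≤ r) :
    ∃ h : ℕ, 0 < h ∧ ∃ η : V → (Fin d → ℤ), Function.Injective η ∧
      ∀ u v : V, G.Adj u v → (Zlat d).dist (η u) (η v) ≤ h := by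
  set c : ℝ := (Real.sqrt d + 1) / s with hc
  have hsd : (0:ℝ) ≤ Real.sqrt d := Real.sqrt_nonneg d
  have hc0 : 0 < c := div_pos (by positivity) hs
  set η : V → (Fin d → ℤ) := fun u i => ⌊c * f u i⌋ with hη
  refine ⟨d * (⌈c * r⌉₊ + 1) + 1, Nat.succ_pos _, η, ?_, ?_⟩
  · -- injectivity
    intro u v huv
    by_contra hne
    have hlt : ∀ i, |f u i - f v i| ≤ 1 / c := by
      intro i
      have hfl : ⌊c * f u i⌋ = ⌊c * f v i⌋ := by
        have := congrFun huv i
        simpa [hη] using this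
      have h1 : |c * f u i - c * f v i| < 1 := Int.abs_sub_lt_one_of_floor_eq_floor hfl
      rw [← mul_sub, abs_mul, abs_of_pos hc0] at h1
      rw [le_div_iff₀ hc0, mul_comm]
      exact h1.le
    have hdsq : dist (f u) (f v) ≤ Real.sqrt d * (1 / c) := by
      rw [EuclideanSpace.dist_eq]
      have hsum : ∑ i, dist (f u i) (f v i) ^ 2 ≤ (d : ℝ) * (1 / c) ^ 2 := by
        calc ∑ i, dist (f u i) (f v i) ^ 2 ≤ ∑ _i : Fin d, (1 / c) ^ 2 := by
              refine Finset.sum_le_sum fun i _ => ?_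
              rw [Real.dist_eq]
              exact pow_le_pow_left₀ (abs_nonneg _) (hlt i) 2
          _ = (d : ℝ) * (1 / c) ^ 2 := by simp [mul_comm]
      calc Real.sqrt (∑ i, dist (f u i) (f v i) ^ 2)
          ≤ Real.sqrt ((d : ℝ) * (1 / c) ^ 2) := Real.sqrt_le_sqrt hsum
        _ = Real.sqrt d * (1 / c) := by
            rw [Real.sqrt_mul (by positivity), Real.sqrt_sq (by positivity)]
    have hlt2 : Real.sqrt d * (1 / c) < s := by
      have h1 : Real.sqrt d * (1 / c) = Real.sqrt d * s / (Real.sqrt d + 1) := by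
        rw [hc]; field_simp
      rw [h1, div_lt_iff₀ (by positivity)]
      nlinarith
    have := hmin u v hne
    linarith
  · -- edge bound
    intro u v huv
    have hdist := hr u v huv
    have hb : ∀ i, |η u i - η v i| ≤ (⌈c * r⌉₊ : ℤ) + 1 := by
      intro i
      have h1 : |f u i - f v i| ≤ dist (f u) (f v) := euclidean_coord_le (f u) (f v) i
      have h2 : |c * f u i - c * f v i| ≤ c * r := by
        rw [← mul_sub, abs_mul, abs_of_pos hc0]
        exact mul_le_mul_of_nonneg_left (h1.trans hdist) hc0.le
      have hfu1 := Int.floor_le (c * f u i)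
      have hfu2 := Int.lt_floor_add_one (c * f u i)
      have hfv1 := Int.floor_le (c * f v i)
      have hfv2 := Int.lt_floor_add_one (c * f v i)
      have habs1 := le_abs_self (c * f u i - c * f v i)
      have habs2 := neg_abs_le (c * f u i - c * f v i)
      have hre : |(⌊c * f u i⌋ : ℝ) - (⌊c * f v i⌋ : ℝ)| ≤ c * r + 1 := by
        rw [abs_le]
        constructor <;> linarith
      have hce : c * r ≤ (⌈c * r⌉₊ : ℝ) := Nat.le_ceil _
      have : |(⌊c * f u i⌋ : ℝ) - (⌊c * f v i⌋ : ℝ)| ≤ ((⌈c * r⌉₊ : ℝ)) + 1 := by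
        linarith
      have hcast : ((|η u i - η v i| : ℤ) : ℝ) ≤ (((⌈c * r⌉₊ : ℤ) + 1 : ℤ) : ℝ) := by
        push_cast
        simpa [hη] using this
      exact_mod_cast hcast
    have hsum : ∑ i, |η u i - η v i| ≤ (d : ℤ) * ((⌈c * r⌉₊ : ℤ) + 1) := by
      calc ∑ i, |η u i - η v i| ≤ ∑ _i : Fin d, ((⌈c * r⌉₊ : ℤ) + 1) :=
            Finset.sum_le_sum fun i _ => hb i
        _ = (d : ℤ) * ((⌈c * r⌉₊ : ℤ) + 1) := by simp [Finset.sum_const]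
    have h1 : (Zlat d).dist (η u) (η v) ≤ (∑ i, |η u i - η v i|).toNat :=
      zlat_dist_le d (η u) (η v)
    have h2 : (∑ i, |η u i - η v i|).toNat ≤ d * (⌈c * r⌉₊ + 1) := by
      rw [Int.toNat_le]
      push_cast
      exact hsum
    omega
end

section
/- The 2-dimensional lattice Z_2 is not sparse in ℝ: there is no drawing f: ℤ² → ℝ with minimum node distance s > 0 and finite maximum connected range r < ∞. -/
/-- The 2-dimensional lattice Z₂ is not sparse in ℝ: there is no drawing
f : ℤ² → ℝ with positive minimum node distance and finite maximum connected range. -/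
theorem Zlat_two_not_sparse_in_R :
    ¬ ∃ f : (Fin 2 → ℤ) → ℝ,
      (∃ s : ℝ, 0 < s ∧ ∀ u v : Fin 2 → ℤ, u ≠ v → s ≤ |f u - f v|) ∧
      (∃ r : ℝ, ∀ u v : Fin 2 → ℤ, (Zlat 2).Adj u v → |f u - f v| ≤ r) := by
  rintro ⟨f, ⟨s, hs, hsep⟩, ⟨r, hr⟩⟩
  set g : ℕ → ℕ → ℝ := fun a b => f ![(a : ℤ), (b : ℤ)] with hg
  have hadj1 : ∀ a b : ℤ, (Zlat 2).Adj ![a + 1, b] ![a, b] := by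
    intro a b
    show ∑ i, |(![a + 1, b] : Fin 2 → ℤ) i - ![a, b] i| = 1
    simp [Fin.sum_univ_two]
  have hadj2 : ∀ a b : ℤ, (Zlat 2).Adj ![a, b + 1] ![a, b] := by
    intro a b
    show ∑ i, |(![a, b + 1] : Fin 2 → ℤ) i - ![a, b] i| = 1
    simp [Fin.sum_univ_two]
  have hne : (![1, 0] : Fin 2 → ℤ) ≠ ![0, 0] := by
    intro h
    have := congrFun h 0
    simp at this
  have hr0 : 0 < r :=
    lt_of_lt_of_le hs (le_trans (hsep _ _ hne) (hr _ _ (by simpa using hadj1 0 0)))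
  -- horizontal bound
  have hH : ∀ b a : ℕ, |g a b - g 0 b| ≤ a * r := by
    intro b a
    induction a with
    | zero => simp
    | succ a ih =>
      have hstep : |g (a + 1) b - g a b| ≤ r := by
        have := hr _ _ (hadj1 (a : ℤ) (b : ℤ))
        simpa [hg, Nat.cast_add, Nat.cast_one] using this
      calc |g (a + 1) b - g 0 b|
          ≤ |g (a + 1) b - g a b| + |g a b - g 0 b| := abs_sub_le _ _ _
        _ ≤ r + a * r := add_le_add hstep ih
        _ = (a + 1 : ℕ) * r := by push_cast; ring
  have hV : ∀ b : ℕ, |g 0 b - g 0 0| ≤ b * r := by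
    intro b
    induction b with
    | zero => simp
    | succ b ih =>
      have hstep : |g 0 (b + 1) - g 0 b| ≤ r := by
        have := hr _ _ (hadj2 (0 : ℤ) (b : ℤ))
        simpa [hg, Nat.cast_add, Nat.cast_one] using this
      calc |g 0 (b + 1) - g 0 0|
          ≤ |g 0 (b + 1) - g 0 b| + |g 0 b - g 0 0| := abs_sub_le _ _ _
        _ ≤ r + b * r := add_le_add hstep ih
        _ = (b + 1 : ℕ) * r := by push_cast; ring
  -- choose n
  set n : ℕ := ⌈4 * r / s⌉₊ with hn
  have hn1 : 1 ≤ n := by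
    have : (0 : ℝ) < 4 * r / s := by positivity
    exact Nat.one_le_ceil_iff.mpr this
  have hnge : 4 * r / s ≤ (n : ℝ) := Nat.le_ceil _
  set c : ℝ := g 0 0 - 2 * n * r with hc
  have hbound : ∀ a b : ℕ, a ≤ n → b ≤ n → c ≤ g a b ∧ g a b ≤ c + 4 * n * r := by
    intro a b ha hb
    have h1 : |g a b - g 0 0| ≤ 2 * n * r := by
      calc |g a b - g 0 0| ≤ |g a b - g 0 b| + |g 0 b - g 0 0| := abs_sub_le _ _ _
        _ ≤ a * r + b * r := add_le_add (hH b a) (hV b)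
        _ ≤ n * r + n * r := by
            gcongr <;> exact_mod_cast (by assumption)
        _ = 2 * n * r := by ring
    rw [abs_le] at h1
    constructor
    · simp only [hc]; linarith [h1.1]
    · simp only [hc]; linarith [h1.2]
  -- the counting map
  set F : Fin (n + 1) × Fin (n + 1) → ℤ := fun p => ⌊(g p.1 p.2 - c) / s⌋ with hF
  set M : ℤ := ⌊4 * (n : ℝ) * r / s⌋ with hM
  have hmaps : ∀ p : Fin (n + 1) × Fin (n + 1), F p ∈ Finset.Icc (0 : ℤ) M := by
    intro p
    obtain ⟨h1, h2⟩ := hbound p.1 p.2 (Nat.lt_succ_iff.mp p.1.isLt) (Nat.lt_succ_iff.mp p.2.isLt)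
    rw [Finset.mem_Icc]
    constructor
    · exact Int.floor_nonneg.mpr (div_nonneg (by linarith) hs.le)
    · exact Int.floor_le_floor (by gcongr <;> linarith)
  have hinj : Function.Injective F := by
    intro p q hpq
    by_contra hne'
    have hvne : (![(p.1 : ℤ), (p.2 : ℤ)] : Fin 2 → ℤ) ≠ ![(q.1 : ℤ), (q.2 : ℤ)] := by
      intro h
      apply hne'
      have h0 := congrFun h 0
      have h1 := congrFun h 1
      simp only [Matrix.cons_val_zero, Matrix.cons_val_one, Matrix.head_cons] at h0 h1
      ext
      · exact_mod_cast h0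
      · exact_mod_cast h1
    have hsep' : s ≤ |g p.1 p.2 - g q.1 q.2| := hsep _ _ hvne
    have hlt : |(g p.1 p.2 - c) / s - (g q.1 q.2 - c) / s| < 1 :=
      Int.abs_sub_lt_one_of_floor_eq_floor hpq
    have : |g p.1 p.2 - g q.1 q.2| < s := by
      have heq : (g p.1 p.2 - c) / s - (g q.1 q.2 - c) / s
          = (g p.1 p.2 - g q.1 q.2) / s := by ring
      rw [heq, abs_div, abs_of_pos hs, div_lt_one hs] at hlt
      exact hlt
    linarith
  -- cardinality
  have hcard : (n + 1) * (n + 1) ≤ (Finset.Icc (0 : ℤ) M).card := by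
    have := Finset.card_le_card_of_injOn (s := Finset.univ) F (fun p _ => hmaps p) (hinj.injOn)
    simpa [Finset.card_univ] using this
  have hM0 : 0 ≤ M := by
    have := hmaps ⟨0, 0⟩
    rw [Finset.mem_Icc] at this
    exact le_trans this.1 this.2
  rw [Int.card_Icc] at hcard
  have hcard' : ((n : ℤ) + 1) * ((n : ℤ) + 1) ≤ M + 1 := by
    have h3 : (((n + 1) * (n + 1) : ℕ) : ℤ) ≤ M + 1 - 0 := by
      rw [← Int.toNat_of_nonneg (show (0 : ℤ) ≤ M + 1 - 0 by omega)]
      exact_mod_cast hcard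
    push_cast at h3
    linarith
  have hMle : (M : ℝ) ≤ 4 * (n : ℝ) * r / s := Int.floor_le _
  have hcardR : ((n : ℝ) + 1) * ((n : ℝ) + 1) ≤ 4 * (n : ℝ) * r / s + 1 := by
    calc ((n : ℝ) + 1) * ((n : ℝ) + 1) ≤ (M : ℝ) + 1 := by exact_mod_cast hcard'
      _ ≤ 4 * (n : ℝ) * r / s + 1 := by linarith
  have hbig : 4 * (n : ℝ) * r / s ≤ (n : ℝ) * (n : ℝ) := by
    have : 4 * (n : ℝ) * r / s = (n : ℝ) * (4 * r / s) := by ring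
    rw [this]
    have hn0 : (0 : ℝ) ≤ n := Nat.cast_nonneg n
    exact mul_le_mul_of_nonneg_left hnge hn0
  have hn1' : (1 : ℝ) ≤ n := by exact_mod_cast hn1
  nlinarith
end

section
/- The 2-dimensional lattice Z_2 is not dense in ℝ³: there is no drawing f: ℤ² → ℝ³ with finite maximum uncovered diameter γ < ∞ and positive asymptotic distance ratio ρ > 0 (equivalently, no drawing satisfying both: every open ball of some fixed diameter in ℝ³ contains the image of a node, and d_{Z_2}(u,v) ≤ α‖f(u)−f(v)‖ + β for some constants α, β > 0). -/
lemma zlat_adj {u v : Fin 2 → ℤ} : (Zlat 2).Adj u v ↔ ∑ i, |u i - v i| = 1 := Iff.rfl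

lemma zlat_adj_abs_le {u v : Fin 2 → ℤ} (h : (Zlat 2).Adj u v) (i : Fin 2) :
    |u i - v i| ≤ 1 := by
  rw [zlat_adj] at h
  calc |u i - v i| ≤ ∑ j, |u j - v j| :=
        Finset.single_le_sum (f := fun j => |u j - v j|) (fun j _ => abs_nonneg _) (Finset.mem_univ i)
    _ = 1 := h

lemma zlat_abs_le_length {u v : Fin 2 → ℤ} (w : (Zlat 2).Walk u v) (i : Fin 2) :
    |u i - v i| ≤ (w.length : ℤ) := by
  induction w with
  | nil => simp
  | @cons a b c h p ih =>
    calc |a i - c i| ≤ |a i - b i| + |b i - c i| := abs_sub_le _ _ _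
      _ ≤ 1 + (p.length : ℤ) := add_le_add (zlat_adj_abs_le h i) ih
      _ = ((SimpleGraph.Walk.cons h p).length : ℤ) := by
        simp [SimpleGraph.Walk.length_cons, add_comm]

lemma zlat_reachable : ∀ (n : ℕ) (u v : Fin 2 → ℤ),
    (∑ i, |u i - v i|).toNat ≤ n → (Zlat 2).Reachable u v := by
  intro n
  induction n with
  | zero =>
    intro u v h
    have hsum : ∑ i, |u i - v i| = 0 := by
      have h0 : (0:ℤ) ≤ ∑ i, |u i - v i| := Finset.sum_nonneg fun i _ => abs_nonneg _
      omega
    have : ∀ i ∈ Finset.univ, |u i - v i| = 0 :=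
      (Finset.sum_eq_zero_iff_of_nonneg (fun i _ => abs_nonneg _)).mp hsum
    have huv : u = v := funext fun i => by
      have h2 := sub_eq_zero.mp (abs_eq_zero.mp (this i (Finset.mem_univ i))); omega
    exact huv ▸ SimpleGraph.Reachable.refl u
  | succ n ih =>
    intro u v h
    by_cases huv : u = v
    · exact huv ▸ SimpleGraph.Reachable.refl u
    · have : ∃ i, u i ≠ v i := by
        by_contra hc
        push_neg at hc
        exact huv (funext hc)
      obtain ⟨i, hi⟩ := this
      set s : ℤ := (v i - u i).sign with hs
      set u' : Fin 2 → ℤ := Function.update u i (u i + s) with hu'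
      have hstep : |u i + s - v i| = |u i - v i| - 1 := by
        rcases lt_trichotomy (u i) (v i) with hlt | heq | hgt
        · have : s = 1 := by rw [hs, Int.sign_eq_one_iff_pos]; omega
          rw [this]
          rw [abs_of_nonpos (show u i + 1 - v i ≤ 0 by omega), abs_of_neg (show u i - v i < 0 by omega)]; ring
        · exact absurd heq hi
        · have : s = -1 := by rw [hs, Int.sign_eq_neg_one_iff_neg]; omega
          rw [this]
          rw [abs_of_nonneg (show (0:ℤ) ≤ u i + -1 - v i by omega), abs_of_pos (show (0:ℤ) < u i - v i by omega)]; ring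
      have hadj : (Zlat 2).Adj u u' := by
        rw [zlat_adj]
        have hs1 : |s| = 1 := by
          rcases lt_trichotomy (u i) (v i) with hlt | heq | hgt
          · rw [hs, Int.sign_eq_one_iff_pos.mpr (by omega)]; rfl
          · exact absurd heq hi
          · rw [hs, Int.sign_eq_neg_one_iff_neg.mpr (by omega)]; rfl
        rw [Finset.sum_eq_single i]
        · simp [hu', hs1, abs_sub_comm]
        · intro j _ hj
          simp [hu', Function.update_of_ne hj]
        · intro hmem; exact absurd (Finset.mem_univ i) hmem
      have hsum' : ∑ j, |u' j - v j| = (∑ j, |u j - v j|) - 1 := by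
        have : ∀ j, |u' j - v j| = |u j - v j| - (if j = i then 1 else 0) := by
          intro j
          by_cases hj : j = i
          · subst hj; simp [hu', hstep]
          · simp [hu', Function.update_of_ne hj, hj]
        rw [Finset.sum_congr rfl fun j _ => this j, Finset.sum_sub_distrib]
        simp
      have hle : (∑ j, |u' j - v j|).toNat ≤ n := by
        have h1 : (0:ℤ) < |u i - v i| := abs_pos.mpr (sub_ne_zero.mpr hi)
        have hge : (1:ℤ) ≤ ∑ j, |u j - v j| :=
          h1.trans_le (Finset.single_le_sum (f := fun j => |u j - v j|) (fun j _ => abs_nonneg _) (Finset.mem_univ i))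
        omega
      exact hadj.reachable.trans (ih u' v hle)

lemma zlat_abs_le_dist (u v : Fin 2 → ℤ) (i : Fin 2) :
    |u i - v i| ≤ ((Zlat 2).dist u v : ℤ) := by
  obtain ⟨w, hw⟩ := (zlat_reachable _ u v le_rfl).exists_walk_length_eq_dist
  rw [← hw]
  exact zlat_abs_le_length w i
noncomputable def vecR (γ : ℝ) (k : Fin 3 → ℤ) : EuclideanSpace ℝ (Fin 3) :=
  (WithLp.equiv 2 (Fin 3 → ℝ)).symm (fun j => γ * (k j : ℝ))

lemma vec_norm_eq (γ : ℝ) (k : Fin 3 → ℤ) :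
    ‖vecR γ k‖ = Real.sqrt (∑ j, (γ * (k j : ℝ))^2) := by
  simp [vecR, EuclideanSpace.norm_eq, WithLp.equiv_symm_apply, PiLp.toLp_apply, mul_pow, sq_abs]

lemma vec_sub (γ : ℝ) (k k' : Fin 3 → ℤ) : vecR γ k - vecR γ k' = vecR γ (k - k') := by
  rw [vecR, vecR, vecR, WithLp.equiv_symm_apply, ← WithLp.toLp_sub]
  congr 1
  funext j
  simp [mul_sub]

lemma vec_norm_lower {γ : ℝ} (hγ : 0 < γ) {k : Fin 3 → ℤ} (hk : k ≠ 0) :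
    γ ≤ ‖vecR γ k‖ := by
  obtain ⟨j, hj⟩ : ∃ j, k j ≠ 0 := by
    by_contra hc; push_neg at hc; exact hk (funext hc)
  rw [vec_norm_eq]
  have h0 : (1:ℝ) ≤ |(k j : ℝ)| := by
    have := Int.one_le_abs hj
    calc (1:ℝ) ≤ (|k j| : ℤ) := by exact_mod_cast this
      _ = |(k j : ℝ)| := by push_cast; rfl
  have h1 : γ^2 ≤ (γ * (k j : ℝ))^2 := by
    have h2 := abs_nonneg (k j : ℝ)
    have h3 : (1:ℝ) ≤ (k j : ℝ)^2 := by nlinarith [sq_abs ((k j : ℝ))]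
    have h4 := mul_le_mul_of_nonneg_left h3 (sq_nonneg γ)
    nlinarith
  calc γ = Real.sqrt (γ^2) := (Real.sqrt_sq hγ.le).symm
    _ ≤ Real.sqrt (∑ j, (γ * (k j : ℝ))^2) := by
      apply Real.sqrt_le_sqrt
      exact h1.trans (Finset.single_le_sum (f := fun j => (γ * (k j : ℝ))^2)
        (fun j _ => sq_nonneg _) (Finset.mem_univ j))

lemma vec_norm_upper {γ : ℝ} (hγ : 0 < γ) {M : ℕ} {k : Fin 3 → ℤ}
    (hk : ∀ j, 0 ≤ k j ∧ k j ≤ (M : ℤ)) : ‖vecR γ k‖ ≤ 2*γ*M := by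
  rw [vec_norm_eq]
  have hterm : ∀ j : Fin 3, (γ * (k j : ℝ))^2 ≤ (γ * M)^2 := by
    intro j
    have h1 : (0:ℝ) ≤ (k j : ℝ) := by exact_mod_cast (hk j).1
    have h2 : ((k j : ℝ)) ≤ (M : ℝ) := by exact_mod_cast (hk j).2
    have h3 : (k j : ℝ)^2 ≤ (M:ℝ)^2 := by nlinarith
    have h4 := mul_le_mul_of_nonneg_left h3 (sq_nonneg γ)
    nlinarith
  have hsum : ∑ j, (γ * (k j : ℝ))^2 ≤ (2*γ*M)^2 := by
    calc ∑ j, (γ * (k j : ℝ))^2 ≤ ∑ _j : Fin 3, (γ * M)^2 :=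
          Finset.sum_le_sum (fun j _ => hterm j)
      _ = 3 * (γ * M)^2 := by
          rw [Finset.sum_const, Finset.card_univ, Fintype.card_fin]
          ring
      _ ≤ (2*γ*M)^2 := by nlinarith [sq_nonneg (γ * (M:ℝ))]
  calc Real.sqrt (∑ j, (γ * (k j : ℝ))^2) ≤ Real.sqrt ((2*γ*M)^2) := Real.sqrt_le_sqrt hsum
    _ = 2*γ*M := Real.sqrt_sq (by positivity)

/-- The 2-dimensional lattice Z₂ is not dense in ℝ³: there is no drawing
f : ℤ² → ℝ³ with finite maximum uncovered diameter γ (every open ball of diameter γ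
contains the image of a node) and positive asymptotic distance ratio (equivalently,
d_{Z₂}(u,v) ≤ α·‖f u − f v‖ + β for some constants α, β > 0). -/
theorem Zlat_two_not_dense_in_R3 :
    ¬ ∃ f : (Fin 2 → ℤ) → EuclideanSpace ℝ (Fin 3),
      (∃ γ : ℝ, 0 < γ ∧ ∀ x : EuclideanSpace ℝ (Fin 3),
        ∃ u : Fin 2 → ℤ, dist (f u) x < γ / 2) ∧
      (∃ α β : ℝ, 0 < α ∧ 0 < β ∧ ∀ u v : Fin 2 → ℤ,
        ((Zlat 2).dist u v : ℝ) ≤ α * dist (f u) (f v) + β) := by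
  rintro ⟨f, ⟨γ, hγ, hball⟩, α, β, hα, hβ, hdist⟩
  set A : ℝ := 4*α*γ with hA
  set B : ℝ := α*γ + 2*β + 3 with hB
  have hA0 : 0 < A := by positivity
  have hB0 : 0 < B := by positivity
  obtain ⟨M, hM1, hMr⟩ : ∃ M : ℕ, (1:ℝ) ≤ (M:ℝ) ∧ ((A+B)^2 : ℝ) ≤ (M:ℝ) :=
    ⟨max 1 ⌈(A+B)^2⌉₊, Nat.one_le_cast.mpr (le_max_left _ _),
      le_trans (Nat.le_ceil _) (Nat.cast_le.mpr (le_max_right _ _))⟩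
  choose u hu using fun k : Fin 3 → ℤ => hball (f 0 + vecR γ k)
  set D : ℝ := α*(γ/2 + 2*γ*M) + β with hD
  have hD0 : 0 ≤ D := by positivity
  obtain ⟨K, hDK, hKD⟩ : ∃ K : ℕ, D ≤ (K:ℝ) ∧ (K:ℝ) < D + 1 :=
    ⟨⌈D⌉₊, Nat.le_ceil D, Nat.ceil_lt_add_one hD0⟩
  set s : Finset (Fin 3 → ℤ) := Fintype.piFinset (fun _ => Finset.Icc (0:ℤ) (M:ℤ)) with hsdef
  set t : Finset (Fin 2 → ℤ) := Fintype.piFinset (fun _ => Finset.Icc (-(K:ℤ)) (K:ℤ)) with htdef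
  have hmaps : ∀ k ∈ s, u k ∈ t := by
    intro k hk
    have hks : ∀ j, 0 ≤ k j ∧ k j ≤ (M:ℤ) := by
      intro j
      have := Fintype.mem_piFinset.mp hk j
      rwa [Finset.mem_Icc] at this
    have hnorm : ‖vecR γ k‖ ≤ 2*γ*M := vec_norm_upper hγ hks
    have hdf : dist (f (u k)) (f 0) ≤ γ/2 + 2*γ*M := by
      calc dist (f (u k)) (f 0)
          ≤ dist (f (u k)) (f 0 + vecR γ k) + dist (f 0 + vecR γ k) (f 0) :=
            dist_triangle _ _ _
        _ ≤ γ/2 + 2*γ*M := add_le_add (hu k).le (by rw [dist_self_add_left]; exact hnorm)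
    have hgd : ((Zlat 2).dist (u k) 0 : ℝ) ≤ D := by
      calc ((Zlat 2).dist (u k) 0 : ℝ) ≤ α * dist (f (u k)) (f 0) + β := hdist _ _
        _ ≤ D := by rw [hD]; nlinarith
    refine Fintype.mem_piFinset.mpr fun i => ?_
    have habs : |u k i - (0 : Fin 2 → ℤ) i| ≤ ((Zlat 2).dist (u k) 0 : ℤ) :=
      zlat_abs_le_dist _ _ i
    rw [show (0 : Fin 2 → ℤ) i = 0 from rfl, sub_zero] at habs
    have hle : (|u k i| : ℝ) ≤ (K : ℝ) := by
      calc (|u k i| : ℝ) ≤ ((Zlat 2).dist (u k) 0 : ℝ) := by exact_mod_cast habs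
        _ ≤ D := hgd
        _ ≤ K := hDK
    have hle' : |u k i| ≤ (K : ℤ) := by exact_mod_cast hle
    rw [Finset.mem_Icc]
    constructor <;> [skip; skip] <;> · rw [abs_le] at hle'; omega
  have hinj : Set.InjOn u s := by
    intro k _ k' _ he
    by_contra hne
    have hsep : γ ≤ dist (f 0 + vecR γ k) (f 0 + vecR γ k') := by
      rw [dist_add_left, dist_eq_norm, vec_sub]
      exact vec_norm_lower hγ (sub_ne_zero.mpr hne)
    have hlt : dist (f 0 + vecR γ k) (f 0 + vecR γ k') < γ := by
      calc dist (f 0 + vecR γ k) (f 0 + vecR γ k')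
          ≤ dist (f 0 + vecR γ k) (f (u k)) + dist (f (u k)) (f 0 + vecR γ k') :=
            dist_triangle _ _ _
        _ < γ/2 + γ/2 := by
            rw [dist_comm (f 0 + vecR γ k) (f (u k))]
            exact add_lt_add (hu k) (he ▸ hu k')
        _ = γ := by ring
    linarith
  have hcard := Finset.card_le_card_of_injOn u hmaps hinj
  have hcs : s.card = (M+1)^3 := by
    rw [hsdef, Fintype.card_piFinset]
    simp [Int.card_Icc]
  have hct : t.card = (2*K+1)^2 := by
    rw [htdef, Fintype.card_piFinset]
    simp [Int.card_Icc]
    omega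
  rw [hcs, hct] at hcard
  have hcardR : ((M:ℝ)+1)^3 ≤ (2*(K:ℝ)+1)^2 := by exact_mod_cast hcard
  clear hu hball hdist hmaps hinj hcard hcs hct u f s t hsdef htdef
  have h2K : 2*(K:ℝ)+1 ≤ A*(M:ℝ) + B := by
    rw [hD] at hKD
    rw [hA, hB]
    linarith
  have hAB : A*(M:ℝ) + B ≤ (A+B)*(M:ℝ) := by nlinarith
  have hfin : ((M:ℝ)+1)^3 > (2*(K:ℝ)+1)^2 := by
    have h1 : (2*(K:ℝ)+1)^2 ≤ ((A+B)*(M:ℝ))^2 := by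
      have h2 : (0:ℝ) ≤ 2*(K:ℝ)+1 := by positivity
      nlinarith
    have h3 : ((A+B)*(M:ℝ))^2 = (A+B)^2 * (M:ℝ)^2 := by ring
    have h4 : (A+B)^2 * (M:ℝ)^2 ≤ (M:ℝ) * (M:ℝ)^2 :=
      mul_le_mul_of_nonneg_right hMr (sq_nonneg _)
    have h5 : (M:ℝ) * (M:ℝ)^2 < ((M:ℝ)+1)^3 := by nlinarith [hM1, sq_nonneg ((M:ℝ))]
    linarith
  linarith
end

section
/- Matrix-valued effective resistance satisfies the triangle inequality: in a finite connected generalized electrical network (G, R₀) with the same symmetric positive definite k×k resistance R₀ on every edge, for every triple of nodes u, v, w, R^eff_{u,w} ≤ R^eff_{u,v} + R^eff_{v,w} in the Loewner (positive semidefinite) order. -/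
open Finset in
/-- `Reff` is the generalized (matrix-valued) effective resistance between `u` and `v`
in the generalized electrical network `(G, R)`: for every intensity `J` there is a
matrix-valued current `i` (antisymmetric, supported on edges, satisfying the matrix
Kirchhoff current law with net outflow `J` at `u`, `−J` at `v`, `0` elsewhere) and a
matrix-valued potential `p` satisfying Ohm's law `R_e i_e = p_a − p_b` on each edge,
with `p_u − p_v = Reff · J`. -/
def IsEffRes {V : Type*} [Fintype V] [DecidableEq V] {k : ℕ} (G : SimpleGraph V)
    (R : V → V → Matrix (Fin k) (Fin k) ℝ) (u v : V)
    (Reff : Matrix (Fin k) (Fin k) ℝ) : Prop :=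
  ∀ J : Matrix (Fin k) (Fin k) ℝ,
    ∃ i : V → V → Matrix (Fin k) (Fin k) ℝ, ∃ p : V → Matrix (Fin k) (Fin k) ℝ,
      (∀ a b, i b a = - i a b) ∧
      (∀ a b, ¬ G.Adj a b → i a b = 0) ∧
      (∀ a, ∑ b, i a b = (if a = u then J else 0) - (if a = v then J else 0)) ∧
      (∀ a b, G.Adj a b → R a b * i a b = p a - p b) ∧
      p u - p v = Reff * J

namespace EffResTriangleAux

open Finset Matrix

set_option linter.unusedSectionVars false

variable {V : Type*} [Fintype V] [DecidableEq V] {k : ℕ}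

/-- The additive map `M ↦ (M *ᵥ x) ⬝ᵥ c`. -/
def mvdot (x c : Fin k → ℝ) : Matrix (Fin k) (Fin k) ℝ →+ ℝ where
  toFun M := (M *ᵥ x) ⬝ᵥ c
  map_zero' := by simp
  map_add' M N := by simp [Matrix.add_mulVec, add_dotProduct]

lemma mvdot_apply (x c : Fin k → ℝ) (M : Matrix (Fin k) (Fin k) ℝ) :
    mvdot x c M = (M *ᵥ x) ⬝ᵥ c := rfl

lemma div_sum (i : V → V → Matrix (Fin k) (Fin k) ℝ) (J : Matrix (Fin k) (Fin k) ℝ)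
    (u v : V) (x : Fin k → ℝ) (c : V → Fin k → ℝ)
    (hd : ∀ a, ∑ b, i a b = (if a = u then J else 0) - (if a = v then J else 0)) :
    ∑ a, ((∑ b, i a b) *ᵥ x) ⬝ᵥ c a = (J *ᵥ x) ⬝ᵥ c u - (J *ᵥ x) ⬝ᵥ c v := by
  have key : ∀ a, ((∑ b, i a b) *ᵥ x) ⬝ᵥ c a
      = (if a = u then (J *ᵥ x) ⬝ᵥ c a else 0) - (if a = v then (J *ᵥ x) ⬝ᵥ c a else 0) := by
    intro a
    rw [← mvdot_apply, hd a, map_sub]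
    congr 1 <;> split <;> simp [mvdot_apply]
  rw [Finset.sum_congr rfl fun a _ => key a, Finset.sum_sub_distrib,
    Finset.sum_ite_eq' univ u, Finset.sum_ite_eq' univ v]
  simp

lemma pairing (G : SimpleGraph V) (R0 : Matrix (Fin k) (Fin k) ℝ)
    (f g : V → V → Matrix (Fin k) (Fin k) ℝ) (p : V → Matrix (Fin k) (Fin k) ℝ)
    (x y : Fin k → ℝ)
    (hfa : ∀ a b, f b a = - f a b)
    (hf0 : ∀ a b, ¬ G.Adj a b → f a b = 0)
    (hohm : ∀ a b, G.Adj a b → R0 * g a b = p a - p b) :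
    ∑ a, ∑ b, (f a b *ᵥ x) ⬝ᵥ ((R0 * g a b) *ᵥ y)
      = 2 * ∑ a, ((∑ b, f a b) *ᵥ x) ⬝ᵥ (p a *ᵥ y) := by
  have step1 : ∀ a b, (f a b *ᵥ x) ⬝ᵥ ((R0 * g a b) *ᵥ y)
      = (f a b *ᵥ x) ⬝ᵥ (p a *ᵥ y) - (f a b *ᵥ x) ⬝ᵥ (p b *ᵥ y) := by
    intro a b
    by_cases h : G.Adj a b
    · rw [hohm a b h, Matrix.sub_mulVec, dotProduct_sub]
    · simp [hf0 a b h]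
  have comm1 : ∀ (a : V), ∑ b, (f a b *ᵥ x) ⬝ᵥ (p a *ᵥ y)
      = ((∑ b, f a b) *ᵥ x) ⬝ᵥ (p a *ᵥ y) := by
    intro a
    simp only [← mvdot_apply]
    exact (map_sum (mvdot x (p a *ᵥ y)) (fun b => f a b) univ).symm
  have hA : ∑ a, ∑ b, (f a b *ᵥ x) ⬝ᵥ (p a *ᵥ y)
      = ∑ a, ((∑ b, f a b) *ᵥ x) ⬝ᵥ (p a *ᵥ y) :=
    Finset.sum_congr rfl fun a _ => comm1 a
  have hB : ∑ a, ∑ b, (f a b *ᵥ x) ⬝ᵥ (p b *ᵥ y)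
      = - ∑ a, ((∑ b, f a b) *ᵥ x) ⬝ᵥ (p a *ᵥ y) := by
    rw [Finset.sum_comm, ← Finset.sum_neg_distrib]
    refine Finset.sum_congr rfl fun b _ => ?_
    simp only [← mvdot_apply]
    rw [← map_sum (mvdot x (p b *ᵥ y)) (fun a => f a b) univ, ← map_neg]
    congr 1
    rw [← Finset.sum_neg_distrib]
    exact Finset.sum_congr rfl fun a _ => hfa b a
  calc ∑ a, ∑ b, (f a b *ᵥ x) ⬝ᵥ ((R0 * g a b) *ᵥ y)
      = ∑ a, ∑ b, ((f a b *ᵥ x) ⬝ᵥ (p a *ᵥ y) - (f a b *ᵥ x) ⬝ᵥ (p b *ᵥ y)) :=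
        Finset.sum_congr rfl fun a _ => Finset.sum_congr rfl fun b _ => step1 a b
    _ = (∑ a, ∑ b, (f a b *ᵥ x) ⬝ᵥ (p a *ᵥ y)) - ∑ a, ∑ b, (f a b *ᵥ x) ⬝ᵥ (p b *ᵥ y) := by
        rw [← Finset.sum_sub_distrib]
        exact Finset.sum_congr rfl fun a _ => Finset.sum_sub_distrib _ _
    _ = 2 * ∑ a, ((∑ b, f a b) *ᵥ x) ⬝ᵥ (p a *ᵥ y) := by rw [hA, hB]; ring

lemma transpose_eq_of_herm {R0 : Matrix (Fin k) (Fin k) ℝ} (h : R0.IsHermitian) :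
    R0ᵀ = R0 := by
  ext a b
  have := congrFun (congrFun h a) b
  simpa using this

lemma term_sym {R0 : Matrix (Fin k) (Fin k) ℝ} (h : R0.IsHermitian)
    (M N : Matrix (Fin k) (Fin k) ℝ) (x y : Fin k → ℝ) :
    (M *ᵥ x) ⬝ᵥ ((R0 * N) *ᵥ y) = (N *ᵥ y) ⬝ᵥ ((R0 * M) *ᵥ x) := by
  rw [← Matrix.mulVec_mulVec, ← Matrix.mulVec_mulVec, dotProduct_mulVec,
    ← Matrix.mulVec_transpose, transpose_eq_of_herm h, dotProduct_comm]

lemma walk_const (G : SimpleGraph V) (hG : G.Preconnected) (ψ : V → Fin k → ℝ)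
    (h : ∀ a b, G.Adj a b → ψ a = ψ b) (a c : V) : ψ a = ψ c := by
  obtain ⟨wlk⟩ := hG a c
  induction wlk with
  | nil => rfl
  | cons hadj _ ih => exact (h _ _ hadj).trans ih

lemma nonneg_term {R0 : Matrix (Fin k) (Fin k) ℝ} (hR0 : R0.PosDef)
    (M : Matrix (Fin k) (Fin k) ℝ) (x : Fin k → ℝ) :
    0 ≤ (M *ᵥ x) ⬝ᵥ ((R0 * M) *ᵥ x) := by
  rw [← Matrix.mulVec_mulVec]
  rcases eq_or_ne (M *ᵥ x) 0 with h | h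
  · simp [h]
  · have := (hR0.dotProduct_mulVec_pos h).le
    simpa using this

lemma pos_term {R0 : Matrix (Fin k) (Fin k) ℝ} (hR0 : R0.PosDef)
    (M : Matrix (Fin k) (Fin k) ℝ) (x : Fin k → ℝ) (h : M *ᵥ x ≠ 0) :
    0 < (M *ᵥ x) ⬝ᵥ ((R0 * M) *ᵥ x) := by
  rw [← Matrix.mulVec_mulVec]
  have := hR0.dotProduct_mulVec_pos h
  simpa using this

lemma current_const (G : SimpleGraph V) (hG : G.Connected) {R0 : Matrix (Fin k) (Fin k) ℝ}
    (hR0 : R0.PosDef) (i : V → V → Matrix (Fin k) (Fin k) ℝ)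
    (p : V → Matrix (Fin k) (Fin k) ℝ) (x : Fin k → ℝ)
    (hia : ∀ a b, i b a = - i a b) (hi0 : ∀ a b, ¬ G.Adj a b → i a b = 0)
    (hdiv : ∀ a, ∑ b, i a b = 0)
    (hohm : ∀ a b, G.Adj a b → R0 * i a b = p a - p b) :
    ∀ a b, p a *ᵥ x = p b *ᵥ x := by
  have E0 : ∑ a, ∑ b, (i a b *ᵥ x) ⬝ᵥ ((R0 * i a b) *ᵥ x) = 0 := by
    rw [pairing G R0 i i p x x hia hi0 hohm]
    have : ∀ a : V, ((∑ b, i a b) *ᵥ x) ⬝ᵥ (p a *ᵥ x) = 0 := by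
      intro a; rw [hdiv a]; simp
    rw [Finset.sum_congr rfl fun a _ => this a]
    simp
  have hz : ∀ a b : V, (i a b *ᵥ x) ⬝ᵥ ((R0 * i a b) *ᵥ x) = 0 := by
    have h1 := (Finset.sum_eq_zero_iff_of_nonneg
      (fun a _ => Finset.sum_nonneg fun b _ => nonneg_term hR0 (i a b) x)).mp E0
    intro a b
    exact (Finset.sum_eq_zero_iff_of_nonneg
      (fun b _ => nonneg_term hR0 (i a b) x)).mp (h1 a (mem_univ a)) b (mem_univ b)
  refine walk_const G hG.preconnected _ (fun a b hab => ?_)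
  have hiz : i a b *ᵥ x = 0 := by
    by_contra h
    exact absurd (hz a b) (pos_term hR0 (i a b) x h).ne'
  have : (p a - p b) *ᵥ x = 0 := by
    rw [← hohm a b hab, ← Matrix.mulVec_mulVec, hiz, Matrix.mulVec_zero]
  rw [Matrix.sub_mulVec] at this
  exact sub_eq_zero.mp this

lemma effRes_herm (G : SimpleGraph V) {R0 : Matrix (Fin k) (Fin k) ℝ}
    (hR0 : R0.IsHermitian) {u v : V} {Reff : Matrix (Fin k) (Fin k) ℝ}
    (h : IsEffRes G (fun _ _ => R0) u v Reff) : Reff.IsHermitian := by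
  obtain ⟨i, p, hia, hi0, hdiv, hohm, hr⟩ := h 1
  rw [mul_one] at hr
  have key : ∀ x y : Fin k → ℝ, x ⬝ᵥ (Reff *ᵥ y) = y ⬝ᵥ (Reff *ᵥ x) := by
    intro x y
    have e1 := pairing G R0 i i p x y hia hi0 hohm
    have e2 := pairing G R0 i i p y x hia hi0 hohm
    have lhs_eq : ∑ a, ∑ b, (i a b *ᵥ x) ⬝ᵥ ((R0 * i a b) *ᵥ y)
        = ∑ a, ∑ b, (i a b *ᵥ y) ⬝ᵥ ((R0 * i a b) *ᵥ x) :=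
      Finset.sum_congr rfl fun a _ => Finset.sum_congr rfl fun b _ =>
        term_sym hR0 (i a b) (i a b) x y
    rw [e1, e2] at lhs_eq
    rw [div_sum i 1 u v x (fun a => p a *ᵥ y) hdiv,
      div_sum i 1 u v y (fun a => p a *ᵥ x) hdiv] at lhs_eq
    rw [Matrix.one_mulVec, Matrix.one_mulVec] at lhs_eq
    have h1 : x ⬝ᵥ (Reff *ᵥ y) = x ⬝ᵥ (p u *ᵥ y) - x ⬝ᵥ (p v *ᵥ y) := by
      rw [← dotProduct_sub, ← Matrix.sub_mulVec, hr]
    have h2 : y ⬝ᵥ (Reff *ᵥ x) = y ⬝ᵥ (p u *ᵥ x) - y ⬝ᵥ (p v *ᵥ x) := by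
      rw [← dotProduct_sub, ← Matrix.sub_mulVec, hr]
    rw [h1, h2]
    linarith
  have hT : Reffᵀ = Reff := by
    ext a b
    have := key (Pi.single a 1) (Pi.single b 1)
    simpa [Matrix.mulVec_single, single_dotProduct,
      dotProduct_single] using this.symm
  rw [Matrix.IsHermitian, Matrix.conjTranspose_eq_transpose_of_trivial]
  exact hT

lemma max_principle (G : SimpleGraph V) (hG : G.Connected)
    {R0 : Matrix (Fin k) (Fin k) ℝ} (hR0 : R0.PosDef) (v w : V) (hvw : v ≠ w)
    (i : V → V → Matrix (Fin k) (Fin k) ℝ) (p : V → Matrix (Fin k) (Fin k) ℝ)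
    (x : Fin k → ℝ) (hx : x ≠ 0)
    (hi0 : ∀ a b, ¬ G.Adj a b → i a b = 0)
    (hdiv : ∀ a, ∑ b, i a b = (if a = v then 1 else 0) - (if a = w then 1 else 0))
    (hohm : ∀ a b, G.Adj a b → R0 * i a b = p a - p b) :
    ∀ a, (p a *ᵥ x) ⬝ᵥ x ≤ (p v *ᵥ x) ⬝ᵥ x := by
  classical
  have := hG.nonempty
  set φ : V → ℝ := fun a => (p a *ᵥ x) ⬝ᵥ x with hφ
  set r : ℝ := (R0 *ᵥ x) ⬝ᵥ x with hrdef
  have hrpos : 0 < r := by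
    have := hR0.dotProduct_mulVec_pos hx
    simp only [star_trivial] at this
    rw [hrdef, dotProduct_comm]
    exact this
  set L : Matrix (Fin k) (Fin k) ℝ →+ ℝ := (mvdot x x).comp (AddMonoidHom.mulLeft R0) with hLdef
  have hL : ∀ M, L M = ((R0 * M) *ᵥ x) ⬝ᵥ x := fun M => rfl
  have node : ∀ a, ∑ b, (if G.Adj a b then φ a - φ b else 0)
      = (if a = v then r else 0) - (if a = w then r else 0) := by
    intro a
    have h0 := congrArg L (hdiv a)
    rw [map_sum, map_sub] at h0
    have hterm : ∀ b, L (i a b) = (if G.Adj a b then φ a - φ b else 0) := by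
      intro b
      by_cases hab : G.Adj a b
      · rw [if_pos hab, hL, hohm a b hab, Matrix.sub_mulVec, sub_dotProduct]
      · rw [if_neg hab, hi0 a b hab, map_zero]
    have hone : ∀ (c : Prop) (_ : Decidable c),
        L (if c then (1 : Matrix (Fin k) (Fin k) ℝ) else 0) = (if c then r else 0) := by
      intro c hc
      split
      · rw [hL, mul_one]
      · rw [map_zero]
    rw [Finset.sum_congr rfl fun b _ => hterm b] at h0
    rw [h0, hone, hone]
  obtain ⟨a0, _, ha0⟩ := Finset.exists_max_image univ φ Finset.univ_nonempty
  have prop : ∀ a, φ a = φ a0 → a ≠ v → ∀ b, G.Adj a b → φ b = φ a0 := by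
    intro a hM hav b hab
    have hsum := node a
    have hnn : ∀ c ∈ Finset.univ, (0:ℝ) ≤ (if G.Adj a c then φ a - φ c else 0) := by
      intro c _
      split
      · rw [hM]; linarith [ha0 c (mem_univ c)]
      · exact le_refl 0
    rcases eq_or_ne a w with rfl | haw
    · rw [if_neg hav, if_pos rfl] at hsum
      have h2 := Finset.sum_nonneg hnn
      rw [hsum] at h2
      linarith
    · rw [if_neg hav, if_neg haw] at hsum
      have h3 := (Finset.sum_eq_zero_iff_of_nonneg hnn).mp (by rw [hsum]; ring) b (mem_univ b)
      rw [if_pos hab] at h3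
      rw [← hM]; linarith
  have reach : ∀ (a c : V) (wk : G.Walk a c), φ a = φ a0 → φ c = φ a0 ∨ φ v = φ a0 := by
    intro a c wk
    induction wk with
    | nil => exact fun h => Or.inl h
    | @cons a b c hadj tail ih =>
      intro hM
      rcases eq_or_ne a v with rfl | hav
      · exact Or.inr hM
      · exact ih (prop a hM hav b hadj)
  obtain ⟨wk⟩ := hG.preconnected a0 v
  have hv : φ v = φ a0 := (reach a0 v wk rfl).elim id id
  intro a
  exact (ha0 a (mem_univ a)).trans hv.symm.le

end EffResTriangleAux

open EffResTriangleAux Finset Matrix in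
/-- Triangle inequality for matrix-valued effective resistance: in a
finite connected generalized electrical network with the same symmetric positive
definite resistance R₀ on every edge, R^eff_{u,w} ≤ R^eff_{u,v} + R^eff_{v,w} in the
Loewner order. -/
theorem effRes_triangle_inequality {V : Type*} [Fintype V] [DecidableEq V] {k : ℕ}
    (G : SimpleGraph V) (hG : G.Connected)
    (R0 : Matrix (Fin k) (Fin k) ℝ) (hR0 : R0.PosDef)
    (u v w : V) (Ruv Rvw Ruw : Matrix (Fin k) (Fin k) ℝ)
    (huv : IsEffRes G (fun _ _ => R0) u v Ruv)
    (hvw : IsEffRes G (fun _ _ => R0) v w Rvw)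
    (huw : IsEffRes G (fun _ _ => R0) u w Ruw) :
    (Ruv + Rvw - Ruw).PosSemidef := by
  classical
  have hherm : (Ruv + Rvw - Ruw).IsHermitian :=
    ((effRes_herm G hR0.1 huv).add (effRes_herm G hR0.1 hvw)).sub (effRes_herm G hR0.1 huw)
  refine Matrix.posSemidef_iff_dotProduct_mulVec.mpr ⟨hherm, fun x => ?_⟩
  simp only [star_trivial]
  obtain ⟨i1, p1, h1a, h1s, h1d, h1o, h1r⟩ := huv 1
  obtain ⟨i2, p2, h2a, h2s, h2d, h2o, h2r⟩ := hvw 1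
  obtain ⟨i3, p3, h3a, h3s, h3d, h3o, h3r⟩ := huw 1
  rw [mul_one] at h1r h2r h3r
  set f : V → V → Matrix (Fin k) (Fin k) ℝ := fun a b => i1 a b + i2 a b - i3 a b with hf
  set q : V → Matrix (Fin k) (Fin k) ℝ := fun a => p1 a + p2 a - p3 a with hq
  have hfa : ∀ a b, f b a = - f a b := by
    intro a b
    simp only [hf, h1a a b, h2a a b, h3a a b]
    abel
  have hf0 : ∀ a b, ¬ G.Adj a b → f a b = 0 := by
    intro a b h
    simp only [hf, h1s a b h, h2s a b h, h3s a b h]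
    abel
  have hfd : ∀ a, ∑ b, f a b = 0 := by
    intro a
    have hsplit : ∑ b, f a b = (∑ b, i1 a b) + (∑ b, i2 a b) - (∑ b, i3 a b) := by
      simp only [hf]
      rw [← Finset.sum_add_distrib, ← Finset.sum_sub_distrib]
    rw [hsplit, h1d a, h2d a, h3d a]
    split_ifs <;> abel
  have hfo : ∀ a b, G.Adj a b → R0 * f a b = q a - q b := by
    intro a b h
    simp only [hf, hq]
    rw [mul_sub, mul_add, h1o a b h, h2o a b h, h3o a b h]
    abel
  have hqc := current_const G hG hR0 f q x hfa hf0 hfd hfo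
  have S1 := congrArg (fun z => x ⬝ᵥ z) (hqc u v)
  have S2 := congrArg (fun z => x ⬝ᵥ z) (hqc v w)
  simp only [hq, Matrix.add_mulVec, Matrix.sub_mulVec, dotProduct_add,
    dotProduct_sub] at S1 S2
  -- reciprocity
  have e12 := pairing G R0 i1 i2 p2 x x h1a h1s h2o
  have e21 := pairing G R0 i2 i1 p1 x x h2a h2s h1o
  have lhs_eq : ∑ a, ∑ b, (i1 a b *ᵥ x) ⬝ᵥ ((R0 * i2 a b) *ᵥ x)
      = ∑ a, ∑ b, (i2 a b *ᵥ x) ⬝ᵥ ((R0 * i1 a b) *ᵥ x) :=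
    Finset.sum_congr rfl fun a _ => Finset.sum_congr rfl fun b _ =>
      term_sym hR0.1 (i1 a b) (i2 a b) x x
  rw [e12, e21] at lhs_eq
  rw [div_sum i1 1 u v x (fun a => p2 a *ᵥ x) h1d,
    div_sum i2 1 v w x (fun a => p1 a *ᵥ x) h2d] at lhs_eq
  rw [Matrix.one_mulVec] at lhs_eq
  -- maximum principle
  have hMP : x ⬝ᵥ (p2 u *ᵥ x) ≤ x ⬝ᵥ (p2 v *ᵥ x) := by
    rcases eq_or_ne x 0 with rfl | hx
    · simp
    rcases eq_or_ne v w with rfl | hvw'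
    · have hdz : ∀ a, ∑ b, i2 a b = 0 := by intro a; rw [h2d a]; simp
      rw [current_const G hG hR0 i2 p2 x h2a h2s hdz h2o u v]
    · have := max_principle G hG hR0 v w hvw' i2 p2 x hx h2s h2d h2o u
      rw [dotProduct_comm x (p2 u *ᵥ x), dotProduct_comm x (p2 v *ᵥ x)]
      exact this
  have expand : x ⬝ᵥ ((Ruv + Rvw - Ruw) *ᵥ x)
      = x ⬝ᵥ (Ruv *ᵥ x) + x ⬝ᵥ (Rvw *ᵥ x) - x ⬝ᵥ (Ruw *ᵥ x) := by
    rw [Matrix.sub_mulVec, Matrix.add_mulVec, dotProduct_sub, dotProduct_add]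
  rw [expand]
  have t1 : x ⬝ᵥ (Ruv *ᵥ x) = x ⬝ᵥ (p1 u *ᵥ x) - x ⬝ᵥ (p1 v *ᵥ x) := by
    rw [← h1r, Matrix.sub_mulVec, dotProduct_sub]
  have t2 : x ⬝ᵥ (Rvw *ᵥ x) = x ⬝ᵥ (p2 v *ᵥ x) - x ⬝ᵥ (p2 w *ᵥ x) := by
    rw [← h2r, Matrix.sub_mulVec, dotProduct_sub]
  have t3 : x ⬝ᵥ (Ruw *ᵥ x) = x ⬝ᵥ (p3 u *ᵥ x) - x ⬝ᵥ (p3 w *ᵥ x) := by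
    rw [← h3r, Matrix.sub_mulVec, dotProduct_sub]
  linarith
end

section
/- If a graph G is dense in ℝ^d with dense drawing f whose maximum uncovered diameter is γ, then there exists a positive integer h and an injective map η: ℤ^d → V(G) such that for every pair of adjacent lattice points u_z, v_z ∈ ℤ^d, d_G(η(u_z), η(v_z)) ≤ h; i.e., the lattice Z_d embeds in the h-fuzz G^{(h)}. -/
/-- If G is dense in ℝ^d, with a dense drawing f (maximum uncovered
diameter γ: every open ball of diameter γ contains the image of a node, and
d_G(u,v) ≤ α‖f u − f v‖ + β), then the lattice Z_d embeds in some h-fuzz of G: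
there is an injection η : ℤ^d → V with d_G(η u_z, η v_z) ≤ h for all adjacent
lattice points u_z, v_z. -/
theorem dense_graph_fuzz_contains_lattice {V : Type*} {d : ℕ}
    (G : SimpleGraph V) (hG : G.Connected) (f : V → EuclideanSpace ℝ (Fin d))
    (γ α β : ℝ) (hγ : 0 < γ)
    (hcov : ∀ x : EuclideanSpace ℝ (Fin d), ∃ u : V, dist (f u) x < γ / 2)
    (hα : 0 < α) (hβ : 0 < β)
    (hρ : ∀ u v : V, (G.dist u v : ℝ) ≤ α * dist (f u) (f v) + β) :
    ∃ h : ℕ, 0 < h ∧ ∃ η : (Fin d → ℤ) → V, Function.Injective η ∧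
      ∀ uz vz : Fin d → ℤ, (Zlat d).Adj uz vz → G.dist (η uz) (η vz) ≤ h := by
  -- scaled lattice centers
  set c : (Fin d → ℤ) → EuclideanSpace ℝ (Fin d) :=
    fun z => WithLp.toLp 2 (fun i => 2 * γ * (z i : ℝ)) with hc
  choose η hη using fun z => hcov (c z)
  -- coordinate lower bound on distance
  have hcoord : ∀ (x y : EuclideanSpace ℝ (Fin d)) (i : Fin d),
      dist (x i) (y i) ≤ dist x y := by
    intro x y i
    rw [EuclideanSpace.dist_eq]
    have h1 : dist (x i) (y i) ^ 2 ≤ ∑ j, dist (x j) (y j) ^ 2 := by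
      apply Finset.single_le_sum (f := fun j => dist (x j) (y j) ^ 2)
      · intro j _; positivity
      · exact Finset.mem_univ i
    calc dist (x i) (y i) = Real.sqrt (dist (x i) (y i) ^ 2) := by
          rw [Real.sqrt_sq dist_nonneg]
      _ ≤ _ := Real.sqrt_le_sqrt h1
  refine ⟨⌈α * (3 * γ) + β⌉₊, ?_, η, ?_, ?_⟩
  · have : (0:ℝ) < α * (3 * γ) + β := by positivity
    exact Nat.ceil_pos.mpr this
  · intro z w hzw
    by_contra hne
    have hεz := hη z
    have hεw := hη w
    have hηeq : f (η z) = f (η w) := by rw [hzw]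
    -- some coordinate differs
    have : ∃ i, z i ≠ w i := by
      by_contra h
      push_neg at h
      exact hne (funext h)
    obtain ⟨i, hi⟩ := this
    have h1 : (1:ℝ) ≤ |(z i : ℝ) - (w i : ℝ)| := by
      have : (1:ℤ) ≤ |z i - w i| := Int.one_le_abs (sub_ne_zero.mpr hi)
      calc (1:ℝ) = ((1:ℤ) : ℝ) := by norm_num
        _ ≤ (|z i - w i| : ℝ) := by exact_mod_cast this
        _ = |(z i : ℝ) - (w i : ℝ)| := by push_cast; rfl
    have hcdist : 2 * γ ≤ dist (c z) (c w) := by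
      have := hcoord (c z) (c w) i
      have hci : dist (c z i) (c w i) = 2 * γ * |(z i : ℝ) - (w i : ℝ)| := by
        simp only [hc, PiLp.toLp_apply, Real.dist_eq]
        rw [← mul_sub, abs_mul]
        congr 1
        rw [abs_of_pos]; positivity
      nlinarith [this]
    have ht : dist (c z) (c w) ≤ dist (c z) (f (η w)) + dist (f (η w)) (c w) := dist_triangle _ _ _
    have h2 : dist (c z) (f (η w)) < γ / 2 := by rw [← hηeq, dist_comm]; exact hεz
    linarith [hεw]
  · intro z w hzw
    -- adjacent: Euclidean dist of centers ≤ 2γ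
    have hcdist : dist (c z) (c w) ≤ 2 * γ := by
      rw [EuclideanSpace.dist_eq]
      have hsum : ∑ i, dist (c z i) (c w i) ^ 2 ≤ (2 * γ) ^ 2 := by
        have hb : ∀ i ∈ Finset.univ, dist (c z i) (c w i) ^ 2
            ≤ (2*γ)^2 * (|z i - w i| : ℝ) := by
          intro i _
          have hci : dist (c z i) (c w i) = 2 * γ * |(z i : ℝ) - (w i : ℝ)| := by
            simp only [hc, PiLp.toLp_apply, Real.dist_eq]
            rw [← mul_sub, abs_mul]
            congr 1
            rw [abs_of_pos]; positivity
          rw [hci, mul_pow]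
          have hle1 : (|z i - w i| : ℤ) ≤ 1 := by
            rw [← hzw]
            exact Finset.single_le_sum (f := fun j => |z j - w j|) (fun j _ => abs_nonneg _) (Finset.mem_univ i)
          have habs : |(z i : ℝ) - (w i : ℝ)| ^ 2 ≤ (|z i - w i| : ℝ) := by
            have heq : |(z i : ℝ) - (w i : ℝ)| = (|z i - w i| : ℝ) := by push_cast; rfl
            rw [heq]
            have h1 : (|z i - w i| : ℝ) ≤ 1 := by exact_mod_cast hle1
            have h0 : (0:ℝ) ≤ (|z i - w i| : ℝ) := by positivity
            nlinarith
          nlinarith [sq_nonneg (2*γ)]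
        calc ∑ i, dist (c z i) (c w i) ^ 2 ≤ ∑ i, (2*γ)^2 * (|z i - w i| : ℝ) :=
              Finset.sum_le_sum hb
          _ = (2*γ)^2 * ((∑ i, |z i - w i| : ℤ) : ℝ) := by
              push_cast [Finset.mul_sum]; rfl
          _ = (2*γ)^2 := by rw [hzw]; norm_num
      calc Real.sqrt (∑ i, dist (c z i) (c w i) ^ 2) ≤ Real.sqrt ((2*γ)^2) :=
            Real.sqrt_le_sqrt hsum
        _ = 2 * γ := by rw [Real.sqrt_sq (by positivity)]
    have hfd : dist (f (η z)) (f (η w)) ≤ 3 * γ := by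
      have t := dist_triangle4 (f (η z)) (c z) (c w) (f (η w))
      have h1 := hη z
      have h2 := hη w
      rw [dist_comm] at h2
      linarith
    have hb : (G.dist (η z) (η w) : ℝ) ≤ α * (3 * γ) + β := by
      have := hρ (η z) (η w)
      nlinarith
    exact_mod_cast hb.trans (Nat.le_ceil _)
end

section
/- Consider nodes placed at a countable set S ⊂ ℝ^d such that every open ball of diameter γ in ℝ^d contains a point of S, and form the graph G on S with an edge between every pair of points at Euclidean distance at most 2γ. Then G is connected, and moreover the identity drawing of G is dense: for all u,v ∈ S, d_G(u,v) ≤ α‖u−v‖ + β for suitable constants α, β > 0 depending only on γ. -/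
/-- The geometric graph on a set S of points of ℝ^d with connectivity radius c:
distinct points are adjacent whenever their Euclidean distance is at most c. -/
def geomGraph {d : ℕ} (S : Set (EuclideanSpace ℝ (Fin d))) (c : ℝ) :
    SimpleGraph S where
  Adj p q := p ≠ q ∧ dist (p : EuclideanSpace ℝ (Fin d)) q ≤ c
  symm := ⟨by
    rintro p q ⟨h1, h2⟩
    exact ⟨h1.symm, by rwa [dist_comm]⟩⟩
  loopless := ⟨fun p hp => hp.1 rfl⟩

lemma geomGraph_key {d : ℕ} {S : Set (EuclideanSpace ℝ (Fin d))} {γ : ℝ} (hγ : 0 < γ)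
    (hcov : ∀ x : EuclideanSpace ℝ (Fin d), ∃ p ∈ S, dist p x < γ / 2) :
    ∀ n : ℕ, ∀ u v : S, dist (u : EuclideanSpace ℝ (Fin d)) v ≤ 2 * γ + n * γ →
      ∃ w : (geomGraph S (2 * γ)).Walk u v, w.length ≤ n + 1 := by
  intro n
  induction n with
  | zero =>
    intro u v h
    by_cases huv : u = v
    · subst huv; exact ⟨SimpleGraph.Walk.nil, by simp⟩
    · refine ⟨SimpleGraph.Walk.cons (show (geomGraph S (2 * γ)).Adj u v from ⟨huv, ?_⟩) SimpleGraph.Walk.nil, by simp⟩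
      simpa using h
  | succ n ih =>
    intro u v h
    by_cases hle : dist (u : EuclideanSpace ℝ (Fin d)) v ≤ 2 * γ + n * γ
    · obtain ⟨w, hw⟩ := ih u v hle
      exact ⟨w, hw.trans (by omega)⟩
    · push_neg at hle
      set D := dist (u : EuclideanSpace ℝ (Fin d)) v with hD
      have hn0 : (0:ℝ) ≤ (n:ℝ) * γ := by positivity
      have hDpos : 2 * γ < D := by nlinarith
      have hDpos' : 0 < D := by linarith
      set t : ℝ := (3 * γ / 2) / D with ht
      have ht0 : 0 ≤ t := by positivity
      have htD : t * D = 3 * γ / 2 := by rw [ht]; field_simp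
      have ht1 : t ≤ 1 := by
        rw [ht, div_le_one hDpos']; linarith
      set x : EuclideanSpace ℝ (Fin d) := (u : EuclideanSpace ℝ (Fin d)) + t • ((v : EuclideanSpace ℝ (Fin d)) - u) with hx
      have hvu : ‖(v : EuclideanSpace ℝ (Fin d)) - u‖ = D := by
        rw [hD, dist_eq_norm, ← norm_neg]; congr 1; abel
      have hux : dist (u : EuclideanSpace ℝ (Fin d)) x = 3 * γ / 2 := by
        rw [dist_eq_norm, hx]
        have : (u : EuclideanSpace ℝ (Fin d)) - ((u : EuclideanSpace ℝ (Fin d)) + t • ((v : EuclideanSpace ℝ (Fin d)) - u)) = -(t • ((v : EuclideanSpace ℝ (Fin d)) - u)) := by abel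
        rw [this, norm_neg, norm_smul, Real.norm_eq_abs, abs_of_nonneg ht0, hvu, htD]
      have hxv : dist x (v : EuclideanSpace ℝ (Fin d)) = D - 3 * γ / 2 := by
        rw [dist_eq_norm, hx]
        have : (u : EuclideanSpace ℝ (Fin d)) + t • ((v : EuclideanSpace ℝ (Fin d)) - u) - v = -((1 - t) • ((v : EuclideanSpace ℝ (Fin d)) - u)) := by
          rw [sub_smul, one_smul]; abel
        rw [this, norm_neg, norm_smul, Real.norm_eq_abs, abs_of_nonneg (by linarith), hvu]
        have h2 : (1 - t) * D = D - t * D := by ring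
        rw [h2, htD]
      obtain ⟨p, hpS, hpx⟩ := hcov x
      have hup : dist (u : EuclideanSpace ℝ (Fin d)) p ≤ 2 * γ := by
        calc dist (u : EuclideanSpace ℝ (Fin d)) p ≤ dist (u : EuclideanSpace ℝ (Fin d)) x + dist x p := dist_triangle _ _ _
        _ ≤ 3 * γ / 2 + γ / 2 := by rw [hux, dist_comm]; linarith
        _ = 2 * γ := by ring
      have hne : u ≠ (⟨p, hpS⟩ : S) := by
        intro hEq
        have : dist (u : EuclideanSpace ℝ (Fin d)) x < γ / 2 := by
          rw [hEq]; exact hpx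
        rw [hux] at this; linarith
      have hpv : dist p (v : EuclideanSpace ℝ (Fin d)) ≤ 2 * γ + n * γ := by
        calc dist p (v : EuclideanSpace ℝ (Fin d)) ≤ dist p x + dist x (v : EuclideanSpace ℝ (Fin d)) := dist_triangle _ _ _
        _ ≤ γ / 2 + (D - 3 * γ / 2) := by rw [hxv]; linarith
        _ ≤ 2 * γ + n * γ := by
            have : D ≤ 2 * γ + (n + 1 : ℕ) * γ := h
            push_cast at this
            linarith
      obtain ⟨w, hw⟩ := ih ⟨p, hpS⟩ v hpv
      refine ⟨SimpleGraph.Walk.cons ⟨hne, hup⟩ w, ?_⟩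
      exact Nat.succ_le_succ hw

/-- If a countable set S ⊂ ℝ^d has maximum uncovered diameter at most γ
(every open ball of diameter γ meets S), then the geometric graph on S with
connectivity radius 2γ is connected, and its identity drawing is dense:
d_G(u,v) ≤ α‖u−v‖ + β for suitable constants α, β > 0. -/
theorem geomGraph_connected_and_dense {d : ℕ}
    (S : Set (EuclideanSpace ℝ (Fin d))) (hS : S.Countable)
    (γ : ℝ) (hγ : 0 < γ)
    (hcov : ∀ x : EuclideanSpace ℝ (Fin d), ∃ p ∈ S, dist p x < γ / 2) :
    (geomGraph S (2 * γ)).Connected ∧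
    ∃ α β : ℝ, 0 < α ∧ 0 < β ∧ ∀ u v : S,
      ((geomGraph S (2 * γ)).dist u v : ℝ) ≤
        α * dist (u : EuclideanSpace ℝ (Fin d)) v + β := by
  have key := geomGraph_key hγ hcov
  have reach : ∀ u v : S, ∃ n : ℕ, ∃ w : (geomGraph S (2 * γ)).Walk u v, w.length ≤ n + 1 ∧
      (n : ℝ) ≤ dist (u : EuclideanSpace ℝ (Fin d)) v / γ + 1 := by
    intro u v
    set D := dist (u : EuclideanSpace ℝ (Fin d)) v with hD
    have hD0 : 0 ≤ D := dist_nonneg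
    set n := ⌈D / γ⌉₊ with hn
    have h1 : D ≤ 2 * γ + n * γ := by
      have := Nat.le_ceil (D / γ)
      have : D / γ ≤ (n : ℝ) := this
      nlinarith [(div_le_iff₀ hγ).mp this]
    obtain ⟨w, hw⟩ := key n u v h1
    refine ⟨n, w, hw, ?_⟩
    have := Nat.ceil_lt_add_one (by positivity : (0:ℝ) ≤ D / γ)
    linarith [this.le]
  constructor
  · obtain ⟨p, hpS, _⟩ := hcov 0
    rw [SimpleGraph.connected_iff]
    refine ⟨fun u v => ?_, ⟨⟨p, hpS⟩⟩⟩
    obtain ⟨n, w, _, _⟩ := reach u v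
    exact ⟨w⟩
  · refine ⟨1 / γ, 2, by positivity, by norm_num, fun u v => ?_⟩
    obtain ⟨n, w, hw, hn⟩ := reach u v
    have hd : (geomGraph S (2 * γ)).dist u v ≤ w.length := SimpleGraph.dist_le w
    have : ((geomGraph S (2 * γ)).dist u v : ℝ) ≤ (n : ℝ) + 1 := by
      exact_mod_cast hd.trans hw
    rw [one_div, div_eq_inv_mul] at *
    calc ((geomGraph S (2 * γ)).dist u v : ℝ) ≤ (n : ℝ) + 1 := this
    _ ≤ γ⁻¹ * dist (u : EuclideanSpace ℝ (Fin d)) v + 1 + 1 := by linarith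
    _ = γ⁻¹ * dist (u : EuclideanSpace ℝ (Fin d)) v + 2 := by ring
end
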